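/- Let k be a field, R a reduced finitely generated commutative k-algebra, and M an R-module. Let (mᵢ)_{i∈I} be a family of elements of M such that, for every maximal ideal m of R, the images of the mᵢ in the fiber M/(m•M) are linearly independent over the residue field R/m. Then the family (mᵢ)_{i∈I} is linearly independent over R. -/
import Mathlib


/-- If `R` is a reduced finitely generated algebra over a field and `(mᵢ)` is a family of
elements of an `R`-module `M` whose images in each fiber `M/(m•M)` (at every maximal ideal `m`)
are linearly independent over the residue field `R/m`, then the family is linearly independent
over `R`. -/
theorem linearIndependent_of_fiberwise_linearIndependent
    (k : Type*) [Field k]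
    (R : Type*) [CommRing R] [IsReduced R] [Algebra k R] [Algebra.FiniteType k R]
    (M : Type*) [AddCommGroup M] [Module R M]
    (ι : Type*) (v : ι → M)
    (hfib : ∀ m : MaximalSpectrum R, LinearIndependent (R ⧸ m.asIdeal)
      (fun i => (Submodule.Quotient.mk (v i) : M ⧸ (m.asIdeal • ⊤ : Submodule R M)))) :
    LinearIndependent R v := by
  have hJac : IsJacobsonRing R := isJacobsonRing_of_finiteType (A := k)
  rw [linearIndependent_iff']
  intro s g hg i hi
  have hmem : ∀ m : MaximalSpectrum R, g i ∈ m.asIdeal := by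
    intro m
    have h0 : ∑ j ∈ s, (Ideal.Quotient.mk m.asIdeal (g j)) •
        (Submodule.Quotient.mk (v j) : M ⧸ (m.asIdeal • ⊤ : Submodule R M)) = 0 := by
      have heq : ∑ j ∈ s, (Ideal.Quotient.mk m.asIdeal (g j)) •
          (Submodule.Quotient.mk (v j) : M ⧸ (m.asIdeal • ⊤ : Submodule R M)) =
          (Submodule.mkQ (m.asIdeal • ⊤ : Submodule R M)) (∑ j ∈ s, g j • v j) := by
        rw [map_sum]; rfl
      rw [heq, hg, map_zero]
    have := linearIndependent_iff'.mp (hfib m) s (fun j => Ideal.Quotient.mk m.asIdeal (g j)) h0 i hi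
    rwa [Ideal.Quotient.eq_zero_iff_mem] at this
  have hz : g i ∈ (⊥ : Ideal R).jacobson :=
    Ideal.mem_sInf.mpr fun {J} hJ' => hmem ⟨J, hJ'.2⟩
  rw [← Ideal.radical_eq_jacobson] at hz
  have hb : (⊥ : Ideal R).radical = ⊥ := nilradical_eq_zero R
  rwa [hb, Ideal.mem_bot] at hz
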